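/- For $e_1 > 6$, define $I_+(e_1, 0) = \int_0^1 \frac{dg}{\sqrt{\frac{2}{3}(1-g)g(e_1 g + 6 + e_1)}}$ and $I_+(1/6, 0)$ correspondingly. Then $I_+(1/6, 0) = \int_0^{1/6}\frac{df}{\sqrt{-\frac{2}{3}(f-\frac{1}{6})f(f+\frac{37}{6})}} > \frac{3\pi}{\sqrt{38}} > \frac{\pi}{4}$. -/
import Mathlib


open Real Set MeasureTheory intervalIntegral

noncomputable section IplusAux

/-- The comparison kernel `1/√((1/6 - x)·x)`. -/
private def Hker : ℝ → ℝ := fun x => 1 / Real.sqrt ((1/6 - x) * x)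

private lemma Hker_meas : Measurable Hker := by
  have h : Continuous fun x : ℝ => Real.sqrt ((1/6 - x) * x) :=
    Real.continuous_sqrt.comp (by continuity)
  unfold Hker
  exact measurable_const.div h.measurable

private lemma Hker_nonneg (x : ℝ) : 0 ≤ Hker x := by
  unfold Hker; positivity

private lemma Hker_int : IntervalIntegrable Hker volume 0 (1/6) := by
  have h1 : IntervalIntegrable Hker volume 0 (1/12) := by
    have hg : IntervalIntegrable (fun x : ℝ => Real.sqrt 12 * x ^ (-(1/2) : ℝ)) volume 0 (1/12) :=
      (intervalIntegrable_rpow' (by norm_num)).const_mul _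
    refine hg.mono_fun' (Hker_meas.aestronglyMeasurable) ?_
    filter_upwards [ae_restrict_mem measurableSet_uIoc] with x hx
    rw [uIoc_of_le (by norm_num)] at hx
    obtain ⟨hx0, hx12⟩ := hx
    have hu : (0:ℝ) < (1/6 - x) * x := by nlinarith
    have hle : x / 12 ≤ (1/6 - x) * x := by nlinarith
    have hb : Hker x ≤ 1 / Real.sqrt (x / 12) := by
      apply one_div_le_one_div_of_le (Real.sqrt_pos.2 (by positivity))
      exact Real.sqrt_le_sqrt hle
    have heq : (1:ℝ) / Real.sqrt (x / 12) = Real.sqrt 12 * x ^ (-(1/2) : ℝ) := by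
      rw [Real.rpow_neg hx0.le, ← Real.sqrt_eq_rpow, Real.sqrt_div hx0.le, one_div_div,
        div_eq_mul_inv]
    calc ‖Hker x‖ = Hker x := by
          rw [Real.norm_eq_abs, abs_of_nonneg (Hker_nonneg x)]
      _ ≤ 1 / Real.sqrt (x / 12) := hb
      _ = _ := heq
  have h2 : IntervalIntegrable Hker volume (1/12) (1/6) := by
    have hg0 : IntervalIntegrable (fun x : ℝ => x ^ (-(1/2) : ℝ)) volume 0 (1/12) :=
      intervalIntegrable_rpow' (by norm_num)
    have hg1 := (hg0.comp_sub_left (1/6)).symm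
    have hg : IntervalIntegrable
        (fun x : ℝ => Real.sqrt 12 * (1/6 - x) ^ (-(1/2) : ℝ)) volume (1/12) (1/6) := by
      have := hg1.const_mul (Real.sqrt 12)
      norm_num at this ⊢
      exact this
    refine hg.mono_fun' (Hker_meas.aestronglyMeasurable) ?_
    filter_upwards [ae_restrict_mem measurableSet_uIoc] with x hx
    rw [uIoc_of_le (by norm_num)] at hx
    obtain ⟨hx12, hx6⟩ := hx
    have hnorm : ‖Hker x‖ = Hker x := by
      rw [Real.norm_eq_abs, abs_of_nonneg (Hker_nonneg x)]
    rcases eq_or_lt_of_le hx6 with heq6 | hlt6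
    · -- x = 1/6 : both sides vanish
      have : Hker x = 0 := by
        simp [Hker, heq6]
      rw [hnorm, this, heq6]
      norm_num [Real.zero_rpow]
    · have hy0 : (0:ℝ) < 1/6 - x := by linarith
      have hu : (0:ℝ) < (1/6 - x) * x := by nlinarith
      have hle : (1/6 - x) / 12 ≤ (1/6 - x) * x := by nlinarith
      have hb : Hker x ≤ 1 / Real.sqrt ((1/6 - x) / 12) := by
        apply one_div_le_one_div_of_le (Real.sqrt_pos.2 (by positivity))
        exact Real.sqrt_le_sqrt hle
      have heq : (1:ℝ) / Real.sqrt ((1/6 - x) / 12)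
          = Real.sqrt 12 * (1/6 - x) ^ (-(1/2) : ℝ) := by
        rw [Real.rpow_neg hy0.le, ← Real.sqrt_eq_rpow, Real.sqrt_div hy0.le, one_div_div,
          div_eq_mul_inv]
      rw [hnorm]
      exact hb.trans heq.le
  exact h1.trans h2

private lemma Hker_integral : ∫ x in (0:ℝ)..(1/6), Hker x = π := by
  have hderiv : ∀ x ∈ Ioo (0:ℝ) (1/6),
      HasDerivWithinAt (fun y : ℝ => Real.arcsin (12 * y - 1)) (Hker x) (Ioi x) x := by
    intro x hx
    obtain ⟨hx0, hx6⟩ := hx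
    have h₁ : 12 * x - 1 ≠ -1 := by intro h; nlinarith
    have h₂ : 12 * x - 1 ≠ 1 := by intro h; nlinarith
    have hinner : HasDerivAt (fun y : ℝ => 12 * y - 1) 12 x := by
      simpa using ((hasDerivAt_id x).const_mul (12:ℝ)).sub_const 1
    have harc := (Real.hasDerivAt_arcsin h₁ h₂).comp x hinner
    have hval : 1 / Real.sqrt (1 - (12 * x - 1) ^ 2) * 12 = Hker x := by
      have h144 : 1 - (12 * x - 1) ^ 2 = 144 * ((1/6 - x) * x) := by ring
      have hsq : Real.sqrt (144 * ((1/6 - x) * x)) = 12 * Real.sqrt ((1/6 - x) * x) := by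
        rw [show (144:ℝ) = 12 ^ 2 by norm_num, Real.sqrt_mul (by positivity),
          Real.sqrt_sq (by norm_num)]
      have hu : (0:ℝ) < (1/6 - x) * x := by nlinarith
      rw [h144, hsq, Hker]
      rw [one_div, mul_comm, eq_comm, one_div]
      rw [mul_inv, ← mul_assoc]
      rw [mul_inv_cancel₀ (by norm_num : (12:ℝ) ≠ 0), one_mul]
    rw [← hval]
    exact harc.hasDerivWithinAt
  have hcont : ContinuousOn (fun y : ℝ => Real.arcsin (12 * y - 1)) (Icc 0 (1/6)) :=
    (Real.continuous_arcsin.comp (by continuity)).continuousOn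
  have := intervalIntegral.integral_eq_sub_of_hasDeriv_right_of_le (by norm_num)
    hcont hderiv Hker_int
  rw [this]
  norm_num [Real.arcsin_one, Real.arcsin_neg_one]

end IplusAux

/-- The estimate `I₊(1/6, 0) > 3π/√38 > π/4`. -/
theorem Iplus_one_sixth_gt :
    (∫ f in (0:ℝ)..(1/6),
        1 / Real.sqrt (-(2/3) * (f - 1/6) * f * (f + 37/6))) > 3 * π / Real.sqrt 38 ∧
    3 * π / Real.sqrt 38 > π / 4 := by
  have sqrt38_pos : (0:ℝ) < Real.sqrt 38 := Real.sqrt_pos.2 (by norm_num)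
  constructor
  · set F : ℝ → ℝ := fun x => 1 / Real.sqrt (-(2/3) * (x - 1/6) * x * (x + 37/6)) with hF
    set G : ℝ → ℝ := fun x => (3 / Real.sqrt 38) * Hker x with hG
    have F_meas : Measurable F := by
      have h : Continuous fun x : ℝ => Real.sqrt (-(2/3) * (x - 1/6) * x * (x + 37/6)) :=
      Real.continuous_sqrt.comp (by continuity)
      rw [hF]
      exact measurable_const.div h.measurable
    have F_nonneg : ∀ x, 0 ≤ F x := fun x => by rw [hF]; positivity
    -- integrability of F by comparison with Hker
    have F_int : IntervalIntegrable F volume 0 (1/6) := by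
      refine Hker_int.mono_fun' (F_meas.aestronglyMeasurable) ?_
      filter_upwards [ae_restrict_mem measurableSet_uIoc] with x hx
      rw [uIoc_of_le (by norm_num)] at hx
      obtain ⟨hx0, hx6⟩ := hx
      have hnorm : ‖F x‖ = F x := by rw [Real.norm_eq_abs, abs_of_nonneg (F_nonneg x)]
      rcases eq_or_lt_of_le hx6 with heq6 | hlt6
      · have : F x = 0 := by
          rw [hF]
          simp only [heq6]
          norm_num
        rw [hnorm, this]
        exact Hker_nonneg x
      · have hu : (0:ℝ) < (1/6 - x) * x := by nlinarith
        have hle : (1/6 - x) * x ≤ -(2/3) * (x - 1/6) * x * (x + 37/6) := by nlinarith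
        rw [hnorm, hF, Hker]
        apply one_div_le_one_div_of_le (Real.sqrt_pos.2 hu)
        exact Real.sqrt_le_sqrt hle
    have G_int : IntervalIntegrable G volume 0 (1/6) := Hker_int.const_mul _
    -- the strict pointwise comparison on the open interval
    have hFG : ∀ x ∈ Ioo (0:ℝ) (1/6), 0 < F x - G x := by
      intro x hx
      obtain ⟨hx0, hx6⟩ := hx
      have hu : (0:ℝ) < (1/6 - x) * x := by nlinarith
      have h9 : Real.sqrt ((38:ℝ)/9) = Real.sqrt 38 / 3 := by
        rw [Real.sqrt_div (by norm_num : (0:ℝ) ≤ 38),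
          show Real.sqrt 9 = 3 by
            rw [show (9:ℝ) = 3^2 by norm_num, Real.sqrt_sq (by norm_num : (0:ℝ) ≤ 3)]]
      have hGx : G x = 1 / Real.sqrt ((38/9) * ((1/6 - x) * x)) := by
        simp only [hG, Hker]
        rw [Real.sqrt_mul (by norm_num : (0:ℝ) ≤ 38/9), h9]
        have hsu : Real.sqrt ((1/6 - x) * x) ≠ 0 := (Real.sqrt_pos.2 hu).ne'
        field_simp
      have hiF : (0:ℝ) < -(2/3) * (x - 1/6) * x * (x + 37/6) := by nlinarith
      have hlt : -(2/3) * (x - 1/6) * x * (x + 37/6) < (38/9) * ((1/6 - x) * x) := by nlinarith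
      have : G x < F x := by
        rw [hGx, hF]
        exact one_div_lt_one_div_of_lt (Real.sqrt_pos.2 hiF) (Real.sqrt_lt_sqrt hiF.le hlt)
      linarith
    have hpos : 0 < ∫ x in (0:ℝ)..(1/6), (F x - G x) :=
      intervalIntegral_pos_of_pos_on (F_int.sub G_int) hFG (by norm_num)
    have hsub : (∫ x in (0:ℝ)..(1/6), (F x - G x))
        = (∫ x in (0:ℝ)..(1/6), F x) - ∫ x in (0:ℝ)..(1/6), G x :=
      intervalIntegral.integral_sub F_int G_int
    have hGval : (∫ x in (0:ℝ)..(1/6), G x) = 3 * π / Real.sqrt 38 := by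
      rw [hG, intervalIntegral.integral_const_mul, Hker_integral]
      ring
    have : 3 * π / Real.sqrt 38 < ∫ x in (0:ℝ)..(1/6), F x := by
      rw [hsub, hGval] at hpos
      linarith
    exact this
  · rw [gt_iff_lt, div_lt_div_iff₀ (by norm_num) sqrt38_pos]
    have h38 : Real.sqrt 38 < 12 := by
      rw [show (12:ℝ) = Real.sqrt 144 by
        rw [show (144:ℝ) = 12^2 by norm_num, Real.sqrt_sq (by norm_num : (0:ℝ) ≤ 12)]]
      exact Real.sqrt_lt_sqrt (by norm_num) (by norm_num)
    nlinarith [Real.pi_pos]
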